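/- Let X and Y be finite-dimensional real vector spaces and let α, β : X → Y be linear maps. If β⁻¹(im α) + ker α = X, then for all but finitely many scalars ε ∈ ℝ one has im(α + εβ) = im α + im β. (This is the image part of the Perturbation Lemma: a generic linear combination of α and β has image equal to im α + im β.) -/

import Mathlib

open Polynomial Matrix

-- square matrix: det ≠ 0 ↔ rank = card
lemma det_ne_zero_iff_rank_eq {m : ℕ} (S : Matrix (Fin m) (Fin m) ℝ) :
    S.det ≠ 0 ↔ S.rank = m := by
  have h1 : S.det ≠ 0 ↔ Function.Injective S.mulVecLin := by
    rw [← not_iff_not, not_not, ← Matrix.exists_mulVec_eq_zero_iff]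
    constructor
    · rintro ⟨v, hv, hv0⟩
      intro hinj
      exact hv (hinj (by simpa [Matrix.mulVecLin_apply] using hv0))
    · intro hni
      by_contra hne
      push_neg at hne
      apply hni
      rw [← LinearMap.ker_eq_bot]
      rw [LinearMap.ker_eq_bot']
      intro v hv
      by_contra hv0
      exact absurd (hne v hv0) (by simpa [Matrix.mulVecLin_apply] using hv)
  rw [h1, LinearMap.injective_iff_surjective, ← LinearMap.range_eq_top]
  rw [Matrix.rank]
  constructor
  · intro ht; rw [ht]; simp
  · intro hr
    apply Submodule.eq_top_of_finrank_eq
    simpa using hr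

lemma surjective_iff_det_ne_zero {V V' : Type*} [AddCommGroup V] [Module ℝ V]
    [AddCommGroup V'] [Module ℝ V'] {n m : ℕ}
    (b : Module.Basis (Fin n) ℝ V) (c : Module.Basis (Fin m) ℝ V') (f : V →ₗ[ℝ] V') :
    Function.Surjective f ↔
      ((LinearMap.toMatrix b c f) * (LinearMap.toMatrix b c f)ᵀ).det ≠ 0 := by
  set M := LinearMap.toMatrix b c f with hM
  have hfin : FiniteDimensional ℝ V' := Module.Basis.finiteDimensional_of_finite c
  have hrank : M.rank = Module.finrank ℝ (LinearMap.range f) := by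
    have := Matrix.rank_eq_finrank_range_toLin M c b
    rwa [hM, Matrix.toLin_toMatrix] at this
  rw [det_ne_zero_iff_rank_eq, Matrix.rank_self_mul_transpose, hrank]
  rw [← LinearMap.range_eq_top]
  constructor
  · intro ht; rw [ht]; simp [finrank_top, Module.finrank_eq_card_basis c]
  · intro hr
    apply Submodule.eq_top_of_finrank_eq
    rw [hr, Module.finrank_eq_card_basis c, Fintype.card_fin]

lemma generic_surjective {V V' : Type*} [AddCommGroup V] [Module ℝ V]
    [FiniteDimensional ℝ V] [AddCommGroup V'] [Module ℝ V'] [FiniteDimensional ℝ V']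
    (f g : V →ₗ[ℝ] V') (hf : Function.Surjective f) :
    {ε : ℝ | ¬ Function.Surjective (f + ε • g)}.Finite := by
  let b := Module.finBasis ℝ V
  let c := Module.finBasis ℝ V'
  set A := LinearMap.toMatrix b c f with hA
  set B := LinearMap.toMatrix b c g with hB
  set N : Matrix _ _ ℝ[X] := A.map C + (X : ℝ[X]) • B.map C with hN
  set P : ℝ[X] := (N * Nᵀ).det with hP
  have hmat : ∀ ε : ℝ, LinearMap.toMatrix b c (f + ε • g) = A + ε • B := by
    intro ε; rw [_root_.map_add, _root_.map_smul, hA, hB]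
  have hev : ∀ ε : ℝ, P.eval ε = ((A + ε • B) * (A + ε • B)ᵀ).det := by
    intro ε
    have hmap : N.map (eval ε) = A + ε • B := by
      ext i j
      simp only [hN, Matrix.map_apply, Matrix.add_apply, Matrix.smul_apply, smul_eq_mul,
        eval_add, eval_mul, eval_C, eval_X]
    have h1 := (evalRingHom ε).map_det (N * Nᵀ)
    rw [RingHom.mapMatrix_apply, Matrix.map_mul, Matrix.transpose_map, coe_evalRingHom, hmap] at h1
    rw [hP]
    exact h1
  have hsurj : ∀ ε : ℝ, Function.Surjective (f + ε • g) ↔ P.eval ε ≠ 0 := by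
    intro ε
    rw [surjective_iff_det_ne_zero b c (f + ε • g), hmat ε, hev ε]
  have hPne : P ≠ 0 := by
    intro h0
    have h1 : Function.Surjective (f + (0 : ℝ) • g) := by rw [zero_smul, add_zero]; exact hf
    rw [hsurj 0, h0] at h1
    simp at h1
  apply Set.Finite.subset (Polynomial.finite_setOf_isRoot hPne)
  intro ε hε
  simp only [Set.mem_setOf_eq] at hε ⊢
  rw [hsurj ε, not_not] at hε
  exact hε



/-- **Perturbation Lemma, image part.**
If `β⁻¹ (range α) ⊔ ker α = ⊤`, then for all but finitely many `ε : ℝ`,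
`range (α + ε • β) = range α ⊔ range β`. -/
theorem perturbation_lemma_image
    (X Y : Type*) [AddCommGroup X] [Module ℝ X] [FiniteDimensional ℝ X]
    [AddCommGroup Y] [Module ℝ Y] [FiniteDimensional ℝ Y]
    (α β : X →ₗ[ℝ] Y)
    (h : (LinearMap.range α).comap β ⊔ LinearMap.ker α = ⊤) :
    {ε : ℝ |
      LinearMap.range (α + ε • β) ≠ LinearMap.range α ⊔ LinearMap.range β}.Finite := by
  set W := (LinearMap.range α).comap β with hW
  have hWα : ∀ x ∈ W, α x ∈ LinearMap.range α := fun x _ => LinearMap.mem_range_self α x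
  have hWβ : ∀ x ∈ W, β x ∈ LinearMap.range α := fun x hx => hx
  set α' : W →ₗ[ℝ] LinearMap.range α := α.restrict hWα with hα'
  set β' : W →ₗ[ℝ] LinearMap.range α := β.restrict hWβ with hβ'
  have hα'surj : Function.Surjective α' := by
    rintro ⟨y, x, rfl⟩
    have hx : x ∈ W ⊔ LinearMap.ker α := h ▸ Submodule.mem_top
    obtain ⟨u, hu, k, hk, rfl⟩ := Submodule.mem_sup.mp hx
    refine ⟨⟨u, hu⟩, ?_⟩
    apply Subtype.ext
    show α u = α (u + k)
    rw [map_add, LinearMap.mem_ker.mp hk, add_zero]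
  have hfin := generic_surjective α' β' hα'surj
  apply Set.Finite.subset (hfin.union (Set.finite_singleton 0))
  intro ε hε
  by_contra hmem
  simp only [Set.mem_union, Set.mem_setOf_eq, Set.mem_singleton_iff, not_or, not_not] at hmem
  obtain ⟨hsurj, hε0⟩ := hmem
  apply hε
  apply le_antisymm
  · rintro _ ⟨x, rfl⟩
    rw [LinearMap.add_apply, LinearMap.smul_apply]
    exact Submodule.add_mem_sup (LinearMap.mem_range_self α x)
      (Submodule.smul_mem _ ε (LinearMap.mem_range_self β x))
  · have hrα : LinearMap.range α ≤ LinearMap.range (α + ε • β) := by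
      rintro y hy
      obtain ⟨w, hw⟩ := hsurj ⟨y, hy⟩
      refine ⟨(w : X), ?_⟩
      have h2 := congrArg Subtype.val hw
      simp only [LinearMap.add_apply, LinearMap.smul_apply, Submodule.coe_add,
        Submodule.coe_smul, LinearMap.restrict_apply, hα', hβ'] at h2 ⊢
      exact h2
    have hker : ∀ k ∈ LinearMap.ker α, β k ∈ LinearMap.range (α + ε • β) := by
      intro k hk
      refine ⟨ε⁻¹ • k, ?_⟩
      rw [LinearMap.add_apply, LinearMap.smul_apply, _root_.map_smul, _root_.map_smul,
        LinearMap.mem_ker.mp hk, smul_zero, zero_add, smul_smul,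
        mul_inv_cancel₀ hε0, one_smul]
    have hrβ : LinearMap.range β ≤ LinearMap.range (α + ε • β) := by
      rintro _ ⟨x, rfl⟩
      have hx : x ∈ W ⊔ LinearMap.ker α := h ▸ Submodule.mem_top
      obtain ⟨u, hu, k, hk, rfl⟩ := Submodule.mem_sup.mp hx
      rw [map_add]
      exact Submodule.add_mem _ (hrα (hWβ u hu)) (hker k hk)
    exact sup_le hrα hrβ
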